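/- If X is a finite connected groupoid (a symmetric set with X_1 finite, connected, for which 𝓔_T : X_n → lim_T X is a bijection for every n ≥ 1 and every spine T of [n]), then X has dimension p(X). -/

import Mathlib

/-- A symmetric (simplicial) set: a functor `Υᵒᵖ → Set`, where `Υ` has objects
`[n] = {0,…,n}` (encoded as `Fin (n+1)`) and all functions as morphisms.
For `α : [m] → [n]` and `x ∈ X_n`, `act α x` is `x · α ∈ X_m`. -/
structure SymSet where
  obj : ℕ → Type
  act : ∀ {m n : ℕ}, (Fin (m + 1) → Fin (n + 1)) → obj n → obj m
  act_id : ∀ {n : ℕ} (x : obj n), act id x = x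
  act_comp : ∀ {m n k : ℕ} (α : Fin (m + 1) → Fin (n + 1)) (β : Fin (n + 1) → Fin (k + 1))
      (x : obj k), act α (act β x) = act (β ∘ α) x

namespace SymSet

/-- `x_{ij} ∈ X_1`, the action on `x ∈ X_n` of the map `[1] → [n]` with `0 ↦ i`, `1 ↦ j`. -/
def edge (X : SymSet) {n : ℕ} (i j : Fin (n + 1)) (x : X.obj n) : X.obj 1 :=
  X.act (fun t : Fin 2 => if t = 0 then i else j) x

/-- The domain of an edge, its image under `ι₀ : [0] → [1]`, `0 ↦ 0`. -/
def edgeDom (X : SymSet) (f : X.obj 1) : X.obj 0 :=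
  X.act (fun _ : Fin 1 => (0 : Fin 2)) f

/-- The codomain of an edge, its image under `ι₁ : [0] → [1]`, `0 ↦ 1`. -/
def edgeCod (X : SymSet) (f : X.obj 1) : X.obj 0 :=
  X.act (fun _ : Fin 1 => (1 : Fin 2)) f

/-- The identity edge `id_a` on an object `a ∈ X_0`, induced by the unique map `[1] → [0]`. -/
def identityEdge (X : SymSet) (a : X.obj 0) : X.obj 1 :=
  X.act (fun _ : Fin 2 => (0 : Fin 1)) a

/-- An edge is an identity if it is in the image of `X_0 → X_1`. -/
def IsIdentityEdge (X : SymSet) (f : X.obj 1) : Prop :=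
  ∃ a : X.obj 0, f = X.identityEdge a

/-- The tuple of edges `x_{ij}` (for `i < j` an edge `{i,j}` of the spine `T`)
associated to an `n`-simplex `x`. -/
def spineTuple (X : SymSet) {n : ℕ} (T : SimpleGraph (Fin (n + 1))) (x : X.obj n) :
    ∀ i j : Fin (n + 1), i < j → T.Adj i j → X.obj 1 :=
  fun i j _ _ => X.edge i j x

/-- Membership in `lim_T X`: the components have matching endpoints. -/
def IsSpineLim (X : SymSet) {n : ℕ} (T : SimpleGraph (Fin (n + 1)))
    (e : ∀ i j : Fin (n + 1), i < j → T.Adj i j → X.obj 1) : Prop :=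
  ∃ v : Fin (n + 1) → X.obj 0, ∀ (i j : Fin (n + 1)) (hlt : i < j) (h : T.Adj i j),
    X.edgeDom (e i j hlt h) = v i ∧ X.edgeCod (e i j hlt h) = v j

/-- The limit `lim_T X` of the diagram associated to a spine `T`. -/
def SpineLim (X : SymSet) {n : ℕ} (T : SimpleGraph (Fin (n + 1))) : Type :=
  { e : ∀ i j : Fin (n + 1), i < j → T.Adj i j → X.obj 1 // X.IsSpineLim T e }

lemma spineTuple_isSpineLim (X : SymSet) {n : ℕ} (T : SimpleGraph (Fin (n + 1)))
    (x : X.obj n) : X.IsSpineLim T (X.spineTuple T x) := by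
  refine ⟨fun i => X.act (fun _ : Fin 1 => i) x, fun i j hlt h => ⟨?_, ?_⟩⟩
  · show X.act _ (X.act _ x) = _
    rw [X.act_comp]
    show X.act ((fun t : Fin 2 => if t = 0 then i else j) ∘ fun _ : Fin 1 => 0) x
      = X.act (fun _ : Fin 1 => i) x
    congr 1
  · show X.act _ (X.act _ x) = _
    rw [X.act_comp]
    show X.act ((fun t : Fin 2 => if t = 0 then i else j) ∘ fun _ : Fin 1 => 1) x
      = X.act (fun _ : Fin 1 => j) x
    congr 1

/-- The map `𝓔_T : X_n → lim_T X`. -/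
def spineMap (X : SymSet) {n : ℕ} (T : SimpleGraph (Fin (n + 1))) (x : X.obj n) :
    X.SpineLim T :=
  ⟨X.spineTuple T x, X.spineTuple_isSpineLim T x⟩

/-- A symmetric set is *spiny* if `𝓔_T` is injective for every `n ≥ 1` and
every spine `T` of `[n]` (a tree with vertex set `[n]`). -/
def Spiny (X : SymSet) : Prop :=
  ∀ n : ℕ, 1 ≤ n → ∀ T : SimpleGraph (Fin (n + 1)), T.IsTree →
    Function.Injective (X.spineMap T)

/-- An element `x ∈ X_n` is degenerate if `x = y · σ` for some noninvertible
surjection `σ : [n] → [k]`. -/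
def Degenerate (X : SymSet) {n : ℕ} (x : X.obj n) : Prop :=
  ∃ (k : ℕ) (σ : Fin (n + 1) → Fin (k + 1)) (y : X.obj k),
    Function.Surjective σ ∧ ¬ Function.Bijective σ ∧ x = X.act σ y

/-- A symmetric subset (subfunctor) of `X`. -/
structure SymSubset (X : SymSet) where
  carrier : ∀ n : ℕ, Set (X.obj n)
  act_mem : ∀ {m n : ℕ} (α : Fin (m + 1) → Fin (n + 1)) {x : X.obj n},
    x ∈ carrier n → X.act α x ∈ carrier m

/-- `X` is `n`-skeletal: the smallest symmetric subset of `X` containing all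
of its `n`-simplices is all of `X`. -/
def IsSkeletal (X : SymSet) (n : ℕ) : Prop :=
  ∀ Y : SymSubset X, (∀ x : X.obj n, x ∈ Y.carrier n) →
    ∀ (m : ℕ) (x : X.obj m), x ∈ Y.carrier m

/-- `X` has dimension `n`: it is `n`-skeletal but not `k`-skeletal for `k < n`
(for `n ≥ 1` this is equivalent to not being `(n-1)`-skeletal). -/
def HasDim (X : SymSet) (n : ℕ) : Prop :=
  X.IsSkeletal n ∧ ∀ k : ℕ, k < n → ¬ X.IsSkeletal k

/-- Two objects are related if there is an edge between them (in either direction). -/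
def EdgeRel (X : SymSet) (a b : X.obj 0) : Prop :=
  ∃ f : X.obj 1, (X.edgeDom f = a ∧ X.edgeCod f = b) ∨ (X.edgeDom f = b ∧ X.edgeCod f = a)

/-- `X` is connected: it is nonempty and any two objects are joined by a
zig-zag of edges. -/
def Connected (X : SymSet) : Prop :=
  Nonempty (X.obj 0) ∧ ∀ a b : X.obj 0, Relation.ReflTransGen X.EdgeRel a b

/-- `n_a`: the number of nonidentity edges with domain `a`. -/
noncomputable def nEdges (X : SymSet) (a : X.obj 0) : ℕ :=
  Nat.card { f : X.obj 1 // X.edgeDom f = a ∧ ¬ X.IsIdentityEdge f }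

/-- `p(X)`: the maximum of the `n_a` over all objects `a`. -/
noncomputable def pVal (X : SymSet) : ℕ := ⨆ a : X.obj 0, X.nEdges a

/-- A map of symmetric sets (a natural transformation). -/
structure SymMap (X Y : SymSet) where
  app : ∀ n : ℕ, X.obj n → Y.obj n
  naturality : ∀ {m n : ℕ} (α : Fin (m + 1) → Fin (n + 1)) (x : X.obj n),
    app m (X.act α x) = Y.act α (app n x)

/-- A map of symmetric sets is an isomorphism iff it is levelwise bijective. -/
def SymMap.IsIso {X Y : SymSet} (F : SymMap X Y) : Prop :=
  ∀ n : ℕ, Function.Bijective (F.app n)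

/-- `X` and `Y` are isomorphic symmetric sets. -/
def Isomorphic (X Y : SymSet) : Prop := ∃ F : SymMap X Y, F.IsIso

/-- The Bousfield–Segal map `𝓑_m : X_m → X_1^m`, `x ↦ (x_{01}, x_{02}, …, x_{0m})`. -/
def bousfield (X : SymSet) {m : ℕ} (x : X.obj m) : Fin m → X.obj 1 :=
  fun i => X.edge 0 i.succ x

/-- `X` is spiny in degrees below `q`: `𝓔_T` is injective for every spine `T`
of `[n]` for each `1 ≤ n ≤ q`. -/
def SpinyBelow (X : SymSet) (q : ℕ) : Prop :=
  ∀ n : ℕ, 1 ≤ n → n ≤ q → ∀ T : SimpleGraph (Fin (n + 1)), T.IsTree →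
    Function.Injective (X.spineMap T)

/-- `X` is a groupoid: `𝓔_T : X_n → lim_T X` is a bijection for every `n ≥ 1`
and every spine `T` of `[n]`. -/
def IsGroupoid (X : SymSet) : Prop :=
  ∀ n : ℕ, 1 ≤ n → ∀ T : SimpleGraph (Fin (n + 1)), T.IsTree →
    Function.Bijective (X.spineMap T)

/-- `X` is reduced: `X_0` is a singleton. -/
def Reduced (X : SymSet) : Prop := Nonempty (X.obj 0) ∧ Subsingleton (X.obj 0)

/-- A partial group is a reduced spiny symmetric set. -/
def IsPartialGroup (X : SymSet) : Prop := X.Reduced ∧ X.Spiny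

/-- The levelwise product of two symmetric sets. -/
def prod (X Y : SymSet) : SymSet where
  obj n := X.obj n × Y.obj n
  act α p := (X.act α p.1, Y.act α p.2)
  act_id p := by cases p with | mk a b => simp only [X.act_id, Y.act_id]
  act_comp α β p := by cases p with | mk a b => simp only [X.act_comp, Y.act_comp]

end SymSet
namespace SymSet

variable (X : SymSet)

/-- The `i`-th vertex of an `n`-simplex. -/
def vertex {n : ℕ} (i : Fin (n + 1)) (x : X.obj n) : X.obj 0 :=
  X.act (fun _ : Fin 1 => i) x

lemma edge_act {m n : ℕ} (σ : Fin (m + 1) → Fin (n + 1)) (u v : Fin (m + 1)) (x : X.obj n) :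
    X.edge u v (X.act σ x) = X.edge (σ u) (σ v) x := by
  unfold edge
  rw [X.act_comp]
  congr 1
  funext t
  by_cases h : t = 0 <;> simp [h, Function.comp]

lemma edgeDom_edge {n : ℕ} (i j : Fin (n + 1)) (x : X.obj n) :
    X.edgeDom (X.edge i j x) = X.vertex i x := by
  unfold edge edgeDom vertex
  rw [X.act_comp]
  have : ((fun t : Fin 2 => if t = 0 then i else j) ∘ fun _ : Fin 1 => (0 : Fin 2))
      = fun _ : Fin 1 => i := by funext t; simp [Function.comp]
  rw [this]

lemma edgeCod_edge {n : ℕ} (i j : Fin (n + 1)) (x : X.obj n) :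
    X.edgeCod (X.edge i j x) = X.vertex j x := by
  unfold edge edgeCod vertex
  rw [X.act_comp]
  have : ((fun t : Fin 2 => if t = 0 then i else j) ∘ fun _ : Fin 1 => (1 : Fin 2))
      = fun _ : Fin 1 => j := by funext t; simp [Function.comp]
  rw [this]

lemma edge_self {n : ℕ} (i : Fin (n + 1)) (x : X.obj n) :
    X.edge i i x = X.identityEdge (X.vertex i x) := by
  unfold edge identityEdge vertex
  rw [X.act_comp]
  have : ((fun _ : Fin 1 => i) ∘ fun _ : Fin 2 => (0 : Fin 1))
      = fun t : Fin 2 => if t = 0 then i else i := by funext t; simp [Function.comp]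
  rw [this]

lemma edgeDom_identityEdge (a : X.obj 0) : X.edgeDom (X.identityEdge a) = a := by
  unfold edgeDom identityEdge
  rw [X.act_comp]
  have : ((fun _ : Fin 2 => (0 : Fin 1)) ∘ fun _ : Fin 1 => (0 : Fin 2)) = id := by
    funext t; exact Subsingleton.elim _ _
  rw [this, X.act_id]

lemma edgeCod_identityEdge (a : X.obj 0) : X.edgeCod (X.identityEdge a) = a := by
  unfold edgeCod identityEdge
  rw [X.act_comp]
  have : ((fun _ : Fin 2 => (0 : Fin 1)) ∘ fun _ : Fin 1 => (1 : Fin 2)) = id := by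
    funext t; exact Subsingleton.elim _ _
  rw [this, X.act_id]

lemma edge_symm {n : ℕ} (i j : Fin (n + 1)) (x : X.obj n) :
    X.edge j i x = X.act (fun t : Fin 2 => if t = 0 then 1 else 0) (X.edge i j x) := by
  unfold edge
  rw [X.act_comp]
  have : ((fun t : Fin 2 => if t = 0 then i else j) ∘ fun t : Fin 2 => if t = 0 then 1 else 0)
      = fun t : Fin 2 => if t = 0 then j else i := by
    funext t; fin_cases t <;> simp [Function.comp]
  rw [this]

lemma act_swap_identityEdge (a : X.obj 0) :
    X.act (fun t : Fin 2 => if t = 0 then 1 else 0) (X.identityEdge a) = X.identityEdge a := by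
  unfold identityEdge
  rw [X.act_comp]
  have : ((fun _ : Fin 2 => (0 : Fin 1)) ∘ fun t : Fin 2 => if t = 0 then 1 else 0)
      = fun _ : Fin 2 => (0 : Fin 1) := by funext t; simp [Function.comp]
  rw [this]

lemma isIdentityEdge_symm {n : ℕ} {i j : Fin (n + 1)} {x : X.obj n}
    (h : X.IsIdentityEdge (X.edge i j x)) : X.IsIdentityEdge (X.edge j i x) := by
  obtain ⟨a, ha⟩ := h
  exact ⟨a, by rw [X.edge_symm, ha, X.act_swap_identityEdge]⟩

end SymSet
namespace SymSet

/-- The star graph on `Fin (n+1)` with center `c`. -/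
def starG (n : ℕ) (c : Fin (n + 1)) : SimpleGraph (Fin (n + 1)) where
  Adj u v := u ≠ v ∧ (u = c ∨ v = c)
  symm := ⟨fun u v h => ⟨h.1.symm, h.2.symm⟩⟩
  loopless := ⟨fun u h => h.1 rfl⟩

lemma starG_connected (n : ℕ) (c : Fin (n + 1)) : (starG n c).Connected := by
  rw [SimpleGraph.connected_iff]
  refine ⟨fun u v => ?_, ⟨c⟩⟩
  have h1 : ∀ w : Fin (n + 1), (starG n c).Reachable w c := by
    intro w
    by_cases hw : w = c
    · exact hw ▸ SimpleGraph.Reachable.refl w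
    · exact SimpleGraph.Adj.reachable ⟨hw, Or.inr rfl⟩
  exact (h1 u).trans (h1 v).symm

lemma starG_isAcyclic (n : ℕ) (c : Fin (n + 1)) : (starG n c).IsAcyclic := by
  intro v w hw
  cases w with
  | nil => exact hw.ne_nil rfl
  | @cons _ a _ h1 q =>
    cases q with
    | nil => have := hw.three_le_length; simp at this
    | @cons _ b _ h2 r =>
      cases r with
      | nil => have := hw.three_le_length; simp at this
      | @cons _ d _ h3 s =>
        have hnd := hw.support_nodup
        simp only [SimpleGraph.Walk.support_cons, List.tail_cons, List.nodup_cons] at hnd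
        -- hnd : a ∉ b :: s.support ∧ (b ∉ s.support ∧ s.support.Nodup)
        rcases h2.2 with ha | hb
        · -- middle vertex a = c
          rcases h3.2 with hb' | hd
          · -- b = c = a, contradiction
            exact (hnd.1 (by simp [ha, hb']))
          · -- d = c = a, but d is head of s.support
            subst hd
            subst ha
            exact hnd.1 (List.mem_cons_of_mem _ (SimpleGraph.Walk.start_mem_support s))
        · -- b = c; then from h1, v = c, so b = v appears twice
          subst hb
          have hv : v = b := by
            rcases h1.2 with h | h
            · exact h
            · exact absurd h (fun he => hnd.1 (by simp [he]))
          subst hv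
          exact hnd.2.1 (SimpleGraph.Walk.end_mem_support s)

lemma starG_isTree (n : ℕ) (c : Fin (n + 1)) : (starG n c).IsTree :=
  ⟨starG_connected n c, starG_isAcyclic n c⟩

end SymSet
namespace SymSet

variable (X : SymSet)

/-- If `x_{ij}` is an identity edge, then `x` is fixed by merging `j` into `i`. -/
lemma merge_of_identityEdge {n : ℕ} (hs : X.Spiny) (x : X.obj n) {i j : Fin (n + 1)}
    (hij : i ≠ j) (hid : X.IsIdentityEdge (X.edge i j x)) :
    X.act (fun k => if k = j then i else k) x = x := by
  have hn : 1 ≤ n := by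
    rcases Nat.eq_zero_or_pos n with h | h
    · exfalso; apply hij; apply Fin.ext; subst h; omega
    · exact h
  obtain ⟨a, ha⟩ := hid
  have hav : a = X.vertex i x := by
    rw [← X.edgeDom_identityEdge a, ← ha, X.edgeDom_edge]
  apply hs n hn (starG n i) (starG_isTree n i)
  apply Subtype.ext
  funext u v hlt hadj
  show X.edge u v (X.act _ x) = X.edge u v x
  rw [X.edge_act]
  rcases hadj.2 with hu | hv
  · -- u = i
    have hunj : ¬u = j := fun h => hij (hu ▸ h)
    by_cases hv : v = j
    · rw [if_pos hv, if_neg hunj, hu, hv, X.edge_self, ← hav, ha]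
    · rw [if_neg hv, if_neg hunj]
  · -- v = i
    have hvnj : ¬v = j := fun h => hij (hv ▸ h)
    by_cases hu : u = j
    · rw [if_pos hu, if_neg hvnj, hv, hu, X.edge_self, ← hav,
        X.edge_symm i j x, ha, X.act_swap_identityEdge]
    · rw [if_neg hu, if_neg hvnj]

end SymSet
namespace SymSet

variable (X : SymSet)

lemma spiny_of_isGroupoid (hX : X.IsGroupoid) : X.Spiny :=
  fun n hn T hT => (hX n hn T hT).1

/-- If `x_{ki} = x_{kj}` with `k, i, j` pairwise distinct, then `x_{ij}` is an identity. -/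
lemma identityEdge_of_eq {n : ℕ} (hX : X.IsGroupoid) (x : X.obj n) {k i j : Fin (n + 1)}
    (hki : k ≠ i) (hkj : k ≠ j) (hij : i ≠ j) (h : X.edge k i x = X.edge k j x) :
    X.IsIdentityEdge (X.edge i j x) := by
  set f := X.edge k i x with hf
  set b := X.edgeCod f with hb
  set T1 := starG 2 (1 : Fin 3) with hT1
  have hadj01 : T1.Adj 0 1 := ⟨by decide, Or.inr rfl⟩
  have hadj12 : T1.Adj 1 2 := ⟨by decide, Or.inl rfl⟩
  set e : ∀ u v : Fin 3, u < v → T1.Adj u v → X.obj 1 :=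
    fun u v _ _ => if u = 0 then f else X.identityEdge b with he
  have hlim : X.IsSpineLim T1 e := by
    refine ⟨fun t => if t = 0 then X.vertex k x else b, fun u v hlt hadj => ?_⟩
    fin_cases u <;> fin_cases v
    all_goals first
      | exact absurd hlt (by decide)
      | (obtain ⟨h1, h2⟩ := hadj; rcases h2 with hh | hh <;> exact absurd hh (by decide))
      | exact ⟨X.edgeDom_edge k i x, rfl⟩
      | exact ⟨X.edgeDom_identityEdge b, X.edgeCod_identityEdge b⟩
  obtain ⟨y, hy⟩ := (hX 2 (by omega) T1 (starG_isTree 2 1)).2 ⟨e, hlim⟩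
  have hyt : X.spineTuple T1 y = e := congrArg Subtype.val hy
  have hy01 : X.edge 0 1 y = f :=
    congrFun (congrFun (congrFun (congrFun hyt 0) 1) (by decide)) hadj01
  have hy12 : X.edge 1 2 y = X.identityEdge b :=
    congrFun (congrFun (congrFun (congrFun hyt 1) 2) (by decide)) hadj12
  -- merge 2 into 1 in y : y₀₂ = y₀₁ = f
  have hm := X.merge_of_identityEdge (X.spiny_of_isGroupoid hX) y
    (show (1 : Fin 3) ≠ 2 by decide) ⟨b, hy12⟩
  have hy02 : X.edge 0 2 y = f := by
    conv_lhs => rw [← hm]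
    rw [X.edge_act, if_neg (show ¬(0 : Fin 3) = 2 by decide), if_pos rfl]
    exact hy01
  -- now compare y with the restriction of x along ρ = [k, i, j] on the star at 0
  set ρ : Fin 3 → Fin (n + 1) := fun t => if t = 0 then k else if t = 1 then i else j with hρ
  have hz : X.act ρ x = y := by
    apply X.spiny_of_isGroupoid hX 2 (by omega) (starG 2 0) (starG_isTree 2 0)
    apply Subtype.ext
    funext u v hlt hadj
    show X.edge u v (X.act ρ x) = X.edge u v y
    rw [X.edge_act]
    fin_cases u <;> fin_cases v
    all_goals first
      | exact absurd hlt (by decide)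
      | (obtain ⟨h1, h2⟩ := hadj; rcases h2 with hh | hh <;> exact absurd hh (by decide))
      | (show X.edge k i x = X.edge 0 1 y; rw [← hf, hy01])
      | (show X.edge k j x = X.edge 0 2 y; rw [← h, ← hy02])
  refine ⟨b, ?_⟩
  have hfin : X.edge 1 2 (X.act ρ x) = X.identityEdge b := by rw [hz, hy12]
  rw [X.edge_act] at hfin
  rwa [show ρ 1 = i from rfl, show ρ 2 = j from rfl] at hfin

end SymSet
namespace SymSet

variable (X : SymSet)

lemma nEdges_le (hfin : Finite (X.obj 1)) (a : X.obj 0) : X.nEdges a ≤ Nat.card (X.obj 1) :=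
  Nat.card_le_card_of_injective _ Subtype.val_injective

lemma nEdges_le_pVal (hfin : Finite (X.obj 1)) (a : X.obj 0) : X.nEdges a ≤ X.pVal :=
  le_ciSup ⟨Nat.card (X.obj 1), fun m ⟨c, hc⟩ => hc ▸ X.nEdges_le hfin c⟩ a

/-- A simplex with no identity edges has dimension at most `p(X)`. -/
lemma dim_le_pVal {m : ℕ} (hX : X.IsGroupoid) (hfin : Finite (X.obj 1)) (x : X.obj m)
    (hnd : ∀ i j : Fin (m + 1), i ≠ j → ¬ X.IsIdentityEdge (X.edge i j x)) :
    m ≤ X.pVal := by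
  set b := X.vertex 0 x with hb
  set g : Fin m → { f : X.obj 1 // X.edgeDom f = b ∧ ¬ X.IsIdentityEdge f } :=
    fun t => ⟨X.edge 0 t.succ x, X.edgeDom_edge 0 t.succ x,
      hnd 0 t.succ (Ne.symm (Fin.succ_ne_zero t))⟩ with hg
  have hginj : Function.Injective g := by
    intro s t hst
    by_contra hne
    have hs : (0 : Fin (m+1)) ≠ s.succ := Ne.symm (Fin.succ_ne_zero s)
    have ht : (0 : Fin (m+1)) ≠ t.succ := Ne.symm (Fin.succ_ne_zero t)
    have hstne : s.succ ≠ t.succ := fun hh => hne (Fin.succ_injective m hh)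
    have heq : X.edge 0 s.succ x = X.edge 0 t.succ x := congrArg Subtype.val hst
    exact hnd s.succ t.succ hstne (X.identityEdge_of_eq hX x hs ht hstne heq)
  calc m = Nat.card (Fin m) := by simp
    _ ≤ X.nEdges b := Nat.card_le_card_of_injective g hginj
    _ ≤ X.pVal := X.nEdges_le_pVal hfin b

lemma isSkeletal_pVal (hX : X.IsGroupoid) (hfin : Finite (X.obj 1)) :
    X.IsSkeletal X.pVal := by
  intro Y hY m
  induction m using Nat.strong_induction_on with
  | _ m IH =>
    intro x
    by_cases hm : m ≤ X.pVal
    · -- degenerate x up to dimension pVal and restrict back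
      set σ : Fin (X.pVal + 1) → Fin (m + 1) :=
        fun t => ⟨min t.val m, by omega⟩ with hσ
      have hmem : X.act σ x ∈ Y.carrier X.pVal := hY _
      have hx : x = X.act (fun t : Fin (m + 1) => Fin.castLE (by omega) t) (X.act σ x) := by
        rw [X.act_comp]
        have : (σ ∘ fun t : Fin (m + 1) => Fin.castLE (by omega : m + 1 ≤ X.pVal + 1) t) = id := by
          funext t
          apply Fin.ext
          show min t.val m = t.val
          have := t.isLt
          omega
        rw [this, X.act_id]
      rw [hx]
      exact Y.act_mem _ hmem
    · -- m > pVal : find an identity edge and collapse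
      push_neg at hm
      have hex : ∃ i j : Fin (m + 1), i ≠ j ∧ X.IsIdentityEdge (X.edge i j x) := by
        by_contra hc
        push_neg at hc
        exact absurd (X.dim_le_pVal hX hfin x fun i j hij => hc i j hij) (by omega)
      obtain ⟨i, j, hij, hid⟩ := hex
      rcases m with _ | m'
      · exact absurd (Fin.ext (by omega)) hij
      · have hmerge := X.merge_of_identityEdge (X.spiny_of_isGroupoid hX) x hij hid
        set δ : Fin (m' + 1) → Fin (m' + 2) := j.succAbove with hδ
        have hπ : ∀ t : Fin (m' + 2), ¬ t = j → ∃ z, δ z = t := fun t ht =>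
          Fin.exists_succAbove_eq ht
        have hi : ∃ z, δ z = i := Fin.exists_succAbove_eq hij
        set π : Fin (m' + 2) → Fin (m' + 1) :=
          fun t => if h : t = j then Classical.choose hi else Classical.choose (hπ t h) with hπ2
        have hcomp : (δ ∘ π) = fun k => if k = j then i else k := by
          funext t
          by_cases ht : t = j
          · show δ (π t) = _
            rw [if_pos ht, hπ2]
            simp only [dif_pos ht]
            exact Classical.choose_spec hi
          · show δ (π t) = _
            rw [if_neg ht, hπ2]
            simp only [dif_neg ht]
            exact Classical.choose_spec (hπ t ht)
        have hx : x = X.act π (X.act δ x) := by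
          rw [X.act_comp, hcomp, hmerge]
        have hmem : X.act δ x ∈ Y.carrier m' := IH m' (by omega) (X.act δ x)
        rw [hx]
        exact Y.act_mem _ hmem

end SymSet
namespace SymSet

variable (X : SymSet)

lemma exists_nondeg (hX : X.IsGroupoid) (hfin : Finite (X.obj 1))
    (hne : Nonempty (X.obj 0)) :
    ∃ x : X.obj X.pVal, ∀ i j : Fin (X.pVal + 1), i ≠ j →
      ¬ X.IsIdentityEdge (X.edge i j x) := by
  -- choose an object attaining the maximum
  have hbdd : BddAbove (Set.range fun a => X.nEdges a) :=
    ⟨Nat.card (X.obj 1), fun m ⟨c, hc⟩ => hc ▸ X.nEdges_le hfin c⟩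
  have hmem : X.pVal ∈ Set.range fun a => X.nEdges a :=
    Nat.sSup_mem (Set.range_nonempty _) hbdd
  obtain ⟨a, ha⟩ := hmem
  haveI : Finite { f : X.obj 1 // X.edgeDom f = a ∧ ¬ X.IsIdentityEdge f } :=
    Subtype.finite
  have hcard : Nat.card { f : X.obj 1 // X.edgeDom f = a ∧ ¬ X.IsIdentityEdge f } = X.pVal := ha
  set S := { f : X.obj 1 // X.edgeDom f = a ∧ ¬ X.IsIdentityEdge f } with hS
  set g : Fin X.pVal → S := fun t => (Finite.equivFin S).symm (Fin.cast hcard.symm t) with hg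
  have hginj : Function.Injective g := by
    intro s t hst
    have := (Finite.equivFin S).symm.injective hst
    exact Fin.cast_injective _ this
  -- build the spine tuple on the star at 0
  set T := starG X.pVal (0 : Fin (X.pVal + 1)) with hT
  have hvne : ∀ {u v : Fin (X.pVal + 1)}, u < v → ¬ v = 0 := by
    intro u v hlt h0
    subst h0
    exact absurd hlt (Fin.not_lt_zero u)
  set e : ∀ u v : Fin (X.pVal + 1), u < v → T.Adj u v → X.obj 1 :=
    fun u v hlt _ => (g (v.pred (hvne hlt))).val with he
  have hlim : X.IsSpineLim T e := by
    refine ⟨fun t => if h : t = 0 then a else X.edgeCod (g (t.pred h)).val,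
      fun u v hlt hadj => ?_⟩
    have hv : ¬ v = 0 := hvne hlt
    have hu : u = 0 := by
      rcases hadj.2 with h | h
      · exact h
      · exact absurd h hv
    subst hu
    constructor
    · exact (g (v.pred (hvne hlt))).2.1
    · show X.edgeCod (e 0 v hlt hadj) = if h : v = 0 then a else X.edgeCod (g (v.pred h)).val
      rw [dif_neg hv]
  -- get the simplex
  have hp0 : 1 ≤ X.pVal ∨ X.pVal = 0 := by omega
  rcases Nat.eq_zero_or_pos X.pVal with hp | hp
  · -- pVal = 0 : the claim is about Fin 1, vacuous
    obtain ⟨a0⟩ := hne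
    refine ⟨?_, ?_⟩
    · exact (hp ▸ a0 : X.obj X.pVal)
    · intro i j hij
      exfalso
      apply hij
      apply Fin.ext
      have hi := i.isLt
      have hj := j.isLt
      omega
  · obtain ⟨x, hy⟩ := (hX X.pVal hp T (starG_isTree _ _)).2 ⟨e, hlim⟩
    have hyt : X.spineTuple T x = e := congrArg Subtype.val hy
    have hedge : ∀ t : Fin X.pVal, X.edge 0 t.succ x = (g t).val := by
      intro t
      have hlt : (0 : Fin (X.pVal + 1)) < t.succ := t.succ_pos
      have hadj : T.Adj 0 t.succ := ⟨Ne.symm (Fin.succ_ne_zero t), Or.inl rfl⟩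
      have := congrFun (congrFun (congrFun (congrFun hyt 0) t.succ) hlt) hadj
      rw [he] at this
      simpa [Fin.pred_succ, spineTuple] using this
    have hC : ∀ i : Fin (X.pVal + 1), ∀ h : ¬ i = 0,
        X.edge 0 i x = (g (i.pred h)).val := by
      intro i h
      have := hedge (i.pred h)
      rwa [Fin.succ_pred] at this
    have hC' : ∀ i : Fin (X.pVal + 1), i ≠ 0 → ¬ X.IsIdentityEdge (X.edge 0 i x) := by
      intro i h hid
      rw [hC i h] at hid
      exact (g (i.pred h)).2.2 hid
    refine ⟨x, fun i j hij hid => ?_⟩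
    by_cases hi0 : i = 0
    · subst hi0
      exact hC' j (Ne.symm hij) hid
    · by_cases hj0 : j = 0
      · subst hj0
        exact hC' i hi0 (X.isIdentityEdge_symm hid)
      · -- both nonzero : merging j into i shows the 0-edges agree
        have hmerge := X.merge_of_identityEdge (X.spiny_of_isGroupoid hX) x hij hid
        have heq : X.edge 0 j x = X.edge 0 i x := by
          conv_lhs => rw [← hmerge]
          rw [X.edge_act, if_neg (show ¬ (0 : Fin (X.pVal + 1)) = j from fun hh => hj0 hh.symm),
            if_pos rfl]
        have : g (j.pred hj0) = g (i.pred hi0) := by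
          apply Subtype.val_injective
          rw [← hC j hj0, ← hC i hi0, heq]
        have hpred := hginj this
        apply hij
        have := congrArg Fin.succ hpred
        rw [Fin.succ_pred, Fin.succ_pred] at this
        exact this.symm

theorem not_isSkeletal (hX : X.IsGroupoid) (hfin : Finite (X.obj 1))
    (hne : Nonempty (X.obj 0)) {k : ℕ} (hk : k < X.pVal) : ¬ X.IsSkeletal k := by
  intro hskel
  obtain ⟨x, hx⟩ := X.exists_nondeg hX hfin hne
  set Y : SymSubset X :=
    { carrier := fun m => { z : X.obj m | ∃ (α : Fin (m + 1) → Fin (k + 1)) (y : X.obj k),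
        z = X.act α y }
      act_mem := by
        intro m n α z hz
        obtain ⟨β, y, rfl⟩ := hz
        exact ⟨β ∘ α, y, X.act_comp α β y⟩ } with hY
  have hYk : ∀ z : X.obj k, z ∈ Y.carrier k := fun z => ⟨id, z, (X.act_id z).symm⟩
  obtain ⟨α, y, hxy⟩ := hskel Y hYk X.pVal x
  obtain ⟨i, j, hij, hαij⟩ := Fintype.exists_ne_map_eq_of_card_lt α
    (by simp only [Fintype.card_fin]; omega)
  apply hx i j hij
  rw [hxy, X.edge_act, hαij]
  exact ⟨X.vertex (α j) y, X.edge_self (α j) y⟩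

end SymSet
/-- a finite connected groupoid has dimension `p(X)`. -/
theorem stmt8 (X : SymSet) (hX : X.IsGroupoid) (hfin : Finite (X.obj 1))
    (hconn : X.Connected) : X.HasDim X.pVal :=
  ⟨X.isSkeletal_pVal hX hfin, fun _ hk => X.not_isSkeletal hX hfin hconn.1 hk⟩
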